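/- Let r ≥ 1 be an integer, let l = (l_1,…,l_r) ∈ ℕ^r satisfy l_1 + ⋯ + l_r = r, and let a_1,…,a_r, a_1',…,a_r' be nonzero real numbers with a_q a_p' − a_p a_q' ≠ 0 for all p ≠ q. Then Π_{q=1}^r a_q^{l_q−1} − Π_{q=1}^r (a_q')^{l_q−1} = Σ_{p : l_p = 0} Π_{q ≠ p} ( a_q/a_p − a_q'/a_p' )^{l_q−1}, where the sum is over all indices p with l_p = 0 and all powers are integer powers (exponent l_q − 1 ∈ ℤ, equal to −1 when l_q = 0). -/

import Mathlib

open scoped BigOperators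
open Polynomial Finset

set_option maxHeartbeats 1000000 in
/-- equation (eq3) of the paper: for `r ≥ 1`, `l ∈ ℕ^r` with `∑ l_q = r`,
and nonzero reals `a_q, a'_q` with `a_q a'_p - a_p a'_q ≠ 0` for `p ≠ q`,
`∏_q a_q^(l_q - 1) - ∏_q a'_q^(l_q - 1)
  = ∑_{p, l_p = 0} ∏_{q ≠ p} (a_q/a_p - a'_q/a'_p)^(l_q - 1)`,
all powers being integer (`zpow`) powers. -/
theorem prod_zpow_sub_prod_zpow (r : ℕ) (hr : 1 ≤ r) (l : Fin r → ℕ)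
    (hl : ∑ q, l q = r) (a a' : Fin r → ℝ)
    (ha : ∀ q, a q ≠ 0) (ha' : ∀ q, a' q ≠ 0)
    (hnd : ∀ p q : Fin r, p ≠ q → a q * a' p - a p * a' q ≠ 0) :
    ∏ q, a q ^ ((l q : ℤ) - 1) - ∏ q, a' q ^ ((l q : ℤ) - 1)
      = ∑ p ∈ Finset.univ.filter (fun p => l p = 0),
          ∏ q ∈ Finset.univ.erase p, (a q / a p - a' q / a' p) ^ ((l q : ℤ) - 1) := by
  classical
  set S : Finset (Fin r) := Finset.univ.filter (fun p => l p = 0) with hSdef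
  set T : Finset (Fin r) := Finset.univ.filter (fun p => ¬ l p = 0) with hTdef
  set s : ℕ := S.card with hs
  set n : Fin r → ℕ := fun q => l q - 1 with hn
  set v : Fin r → ℝ := fun p => a' p / a p with hv
  have hvq : ∀ q, v q = a' q / a q := fun q => rfl
  have hnq : ∀ q, n q = l q - 1 := fun q => rfl
  have hmemS : ∀ p, p ∈ S ↔ l p = 0 := fun p => by simp [hSdef]
  have hmemT : ∀ p, p ∈ T ↔ l p ≠ 0 := fun p => by simp [hTdef]
  have hunion : S ∪ T = Finset.univ := Finset.filter_union_filter_not_eq _ _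
  have hdisj : Disjoint S T := Finset.disjoint_filter_filter_not _ _ _
  have hcards : s + T.card = r := by
    rw [hs, hSdef, hTdef, Finset.card_filter_add_card_filter_not]; simp
  have hsumT : ∑ q ∈ T, n q = s := by
    have h1 : ∑ q ∈ T, n q + T.card = ∑ q ∈ T, l q := by
      rw [Finset.card_eq_sum_ones, ← Finset.sum_add_distrib]
      refine Finset.sum_congr rfl fun q hq => ?_
      have := (hmemT q).mp hq
      simp only [hn]; omega
    have h2 : ∑ q ∈ T, l q = r := by
      have := Finset.sum_filter_add_sum_filter_not Finset.univ (fun p => l p = 0) l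
      rw [← hSdef, ← hTdef] at this
      have hS0 : ∑ q ∈ S, l q = 0 := Finset.sum_eq_zero fun q hq => (hmemS q).mp hq
      omega
    omega
  have hexpT : ∀ q ∈ T, (l q : ℤ) - 1 = (n q : ℤ) := by
    intro q hq
    have := (hmemT q).mp hq
    simp only [hn]; omega
  have hvne : ∀ p q : Fin r, p ≠ q → v p ≠ v q := by
    intro p q hpq h
    apply hnd p q hpq
    rw [hv] at h
    simp only at h
    rw [div_eq_div_iff (ha p) (ha q)] at h
    linarith
  have hinj : Set.InjOn v ↑S := fun p _ q _ h => by
    by_contra hpq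
    exact hvne p q hpq h
  -- the polynomials
  set N : Polynomial ℝ := ∏ q ∈ T, (Polynomial.C (a q) * (Polynomial.X - Polynomial.C (v q))) ^ n q with hN
  set P : Polynomial ℝ := ∏ p ∈ S, (Polynomial.X - Polynomial.C (v p)) with hP
  set L : ℝ := ∏ q ∈ T, a q ^ n q with hL
  have hfac_ne : ∀ q : Fin r, (Polynomial.C (a q) * (Polynomial.X - Polynomial.C (v q))) ≠ 0 :=
    fun q => mul_ne_zero (Polynomial.C_ne_zero.mpr (ha q)) (Polynomial.X_sub_C_ne_zero _)
  have hNne : N ≠ 0 := Finset.prod_ne_zero_iff.mpr fun q _ => pow_ne_zero _ (hfac_ne q)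
  have hNdeg : N.natDegree = s := by
    rw [hN, Polynomial.natDegree_prod _ _ (fun q _ => pow_ne_zero _ (hfac_ne q)), ← hsumT]
    refine Finset.sum_congr rfl fun q hq => ?_
    rw [Polynomial.natDegree_pow,
      Polynomial.natDegree_mul (Polynomial.C_ne_zero.mpr (ha q)) (Polynomial.X_sub_C_ne_zero _),
      Polynomial.natDegree_C, Polynomial.natDegree_X_sub_C]
    ring
  have hNlead : N.leadingCoeff = L := by
    rw [hN, Polynomial.leadingCoeff_prod, hL]
    refine Finset.prod_congr rfl fun q hq => ?_
    rw [Polynomial.leadingCoeff_pow, Polynomial.leadingCoeff_mul, Polynomial.leadingCoeff_C,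
      Polynomial.leadingCoeff_X_sub_C, mul_one]
  have hLne : L ≠ 0 := Finset.prod_ne_zero_iff.mpr fun q _ => pow_ne_zero _ (ha q)
  have hPmonic : P.Monic := Polynomial.monic_prod_of_monic _ _ fun p _ => Polynomial.monic_X_sub_C _
  have hPdeg : P.natDegree = s := by
    rw [hP, Polynomial.natDegree_prod _ _ (fun p _ => Polynomial.X_sub_C_ne_zero _)]
    simp [Polynomial.natDegree_X_sub_C, hs]
  have hPeval : ∀ p ∈ S, P.eval (v p) = 0 := by
    intro p hp
    rw [hP, Polynomial.eval_prod]
    exact Finset.prod_eq_zero hp (by simp)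
  -- Lagrange identity evaluated at 0
  have key : Polynomial.eval 0 N - L * Polynomial.eval 0 P
      = ∑ p ∈ S, N.eval (v p) * ∏ q ∈ S.erase p, ((v p - v q)⁻¹ * (0 - v q)) := by
    have hCLP : (Polynomial.C L * P) ≠ 0 :=
      mul_ne_zero (Polynomial.C_ne_zero.mpr hLne) hPmonic.ne_zero
    have hdegeq : N.degree = (Polynomial.C L * P).degree := by
      rw [Polynomial.degree_eq_natDegree hNne, Polynomial.degree_eq_natDegree hCLP,
        Polynomial.natDegree_mul (Polynomial.C_ne_zero.mpr hLne) hPmonic.ne_zero,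
        Polynomial.natDegree_C, hNdeg, hPdeg, zero_add]
    have hleadeq : N.leadingCoeff = (Polynomial.C L * P).leadingCoeff := by
      rw [Polynomial.leadingCoeff_mul, Polynomial.leadingCoeff_C, hPmonic.leadingCoeff,
        mul_one, hNlead]
    have hdlt : (N - Polynomial.C L * P).degree < (S.card : WithBot ℕ) := by
      have := Polynomial.degree_sub_lt hdegeq hNne hleadeq
      rw [Polynomial.degree_eq_natDegree hNne, hNdeg, hs] at this
      exact_mod_cast this
    have keyP := Lagrange.eq_interpolate hinj hdlt
    have key0 := congrArg (Polynomial.eval 0) keyP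
    rw [Lagrange.interpolate_apply, Polynomial.eval_finset_sum] at key0
    simp only [Polynomial.eval_mul, Polynomial.eval_C, Polynomial.eval_sub] at key0
    rw [key0]
    refine Finset.sum_congr rfl fun p hp => ?_
    congr 1
    · simp [Polynomial.eval_sub, Polynomial.eval_mul, Polynomial.eval_C, hPeval p hp]
    · rw [Lagrange.basis, Polynomial.eval_prod]
      refine Finset.prod_congr rfl fun q hq => ?_
      simp [Lagrange.basisDivisor]
  -- evaluations
  have hN0 : N.eval 0 = (-1 : ℝ) ^ s * ∏ q ∈ T, a' q ^ n q := by
    rw [hN, Polynomial.eval_prod]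
    have : ∀ q ∈ T, ((Polynomial.C (a q) * (Polynomial.X - Polynomial.C (v q))) ^ n q).eval 0
        = (-1 : ℝ) ^ n q * a' q ^ n q := by
      intro q hq
      rw [Polynomial.eval_pow]
      have h1 : (Polynomial.C (a q) * (Polynomial.X - Polynomial.C (v q))).eval 0 = - a' q := by
        have hav : a q * v q = a' q := by rw [hvq q, mul_comm, div_mul_cancel₀ _ (ha q)]
        simp only [Polynomial.eval_mul, Polynomial.eval_C, Polynomial.eval_sub, Polynomial.eval_X]
        rw [mul_sub, hav, mul_zero, zero_sub]
      rw [h1, ← neg_one_mul, mul_pow]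
    rw [Finset.prod_congr rfl this, Finset.prod_mul_distrib, Finset.prod_pow_eq_pow_sum, hsumT]
  have hP0 : P.eval 0 = (-1 : ℝ) ^ s * ((∏ p ∈ S, a' p) * (∏ p ∈ S, a p)⁻¹) := by
    rw [hP, Polynomial.eval_prod]
    have : ∀ p ∈ S, ((Polynomial.X - Polynomial.C (v p)) : Polynomial ℝ).eval 0
        = (-1 : ℝ) * (a' p / a p) := by
      intro p hp
      simp only [Polynomial.eval_sub, Polynomial.eval_X, Polynomial.eval_C, hvq p]
      ring
    rw [Finset.prod_congr rfl this, Finset.prod_mul_distrib, Finset.prod_const,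
      Finset.prod_div_distrib, hs, div_eq_mul_inv]
  set c : ℝ := -(-1 : ℝ) ^ s * (∏ p ∈ S, a' p)⁻¹ with hc
  have hAne : (∏ p ∈ S, a p) ≠ 0 := Finset.prod_ne_zero_iff.mpr fun p _ => ha p
  have hA'ne : (∏ p ∈ S, a' p) ≠ 0 := Finset.prod_ne_zero_iff.mpr fun p _ => ha' p
  -- the goal LHS in terms of the Lagrange data
  have hprodSplit : ∀ b : Fin r → ℝ, (∀ q, b q ≠ 0) →
      ∏ q, b q ^ ((l q : ℤ) - 1) = (∏ q ∈ T, b q ^ n q) * (∏ p ∈ S, b p)⁻¹ := by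
    intro b hb
    rw [← hunion, Finset.prod_union hdisj, mul_comm]
    congr 1
    · exact Finset.prod_congr rfl fun q hq => by rw [hexpT q hq, zpow_natCast]
    · rw [← Finset.prod_inv_distrib]
      refine Finset.prod_congr rfl fun p hp => ?_
      rw [(hmemS p).mp hp]
      norm_num
  have hLHS : ∏ q, a q ^ ((l q : ℤ) - 1) - ∏ q, a' q ^ ((l q : ℤ) - 1)
      = c * (Polynomial.eval 0 N - L * Polynomial.eval 0 P) := by
    rw [hprodSplit a ha, hprodSplit a' ha', hN0, hP0, hc]
    rcases Nat.even_or_odd s with hpar | hpar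
    · rw [hpar.neg_one_pow]
      field_simp [hAne, hA'ne]
      ring
    · rw [hpar.neg_one_pow]
      field_simp [hAne, hA'ne]
      ring
  rw [hLHS, key, Finset.mul_sum]
  refine Finset.sum_congr rfl fun p hp => ?_
  -- per-term identity
  have hlp : l p = 0 := (hmemS p).mp hp
  have hpT : p ∉ T := fun h => (hmemT p).mp h hlp
  have hsplit : Finset.univ.erase p = (S.erase p) ∪ T := by
    rw [← hunion, Finset.erase_union_distrib, Finset.erase_eq_of_notMem hpT]
  have hdisj2 : Disjoint (S.erase p) T := hdisj.mono_left (Finset.erase_subset _ _)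
  set D : Fin r → ℝ := fun q => a q * a' p - a p * a' q with hD
  have hDq : ∀ q, D q = a q * a' p - a p * a' q := fun q => rfl
  have hDne : ∀ q, q ≠ p → D q ≠ 0 := fun q hq => hnd p q hq.symm
  have hcard' : (S.erase p).card = s - 1 := by rw [Finset.card_erase_of_mem hp, hs]
  have hspos : 1 ≤ s := by
    rw [hs]
    exact Finset.card_pos.mpr ⟨p, hp⟩
  have hX : ∀ q, a q / a p - a' q / a' p = D q / (a p * a' p) := by
    intro q
    rw [hDq q, div_sub_div _ _ (ha p) (ha' p)]
  have hVP : ∀ q ∈ T, (Polynomial.C (a q) * (Polynomial.X - Polynomial.C (v q))).eval (v p)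
      = D q / a p := by
    intro q hq
    simp only [Polynomial.eval_mul, Polynomial.eval_C, Polynomial.eval_sub, Polynomial.eval_X,
      hvq, hDq]
    field_simp [ha p, ha q]
  have hNvp : N.eval (v p) = (∏ q ∈ T, D q ^ n q) / (a p) ^ s := by
    rw [hN, Polynomial.eval_prod]
    have : ∀ q ∈ T, ((Polynomial.C (a q) * (Polynomial.X - Polynomial.C (v q))) ^ n q).eval (v p)
        = (D q / a p) ^ n q := by
      intro q hq
      rw [Polynomial.eval_pow, hVP q hq]
    rw [Finset.prod_congr rfl this]
    simp_rw [div_pow]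
    rw [Finset.prod_div_distrib, Finset.prod_pow_eq_pow_sum, hsumT]
  have hBp : ∏ q ∈ S.erase p, ((v p - v q)⁻¹ * (0 - v q))
      = ∏ q ∈ S.erase p, (-(a p * a' q) / D q) := by
    refine Finset.prod_congr rfl fun q hq => ?_
    have hqp : q ≠ p := (Finset.mem_erase.mp hq).1
    have hvpq : v p - v q = D q / (a p * a q) := by
      rw [hvq p, hvq q, hDq q]
      field_simp [ha p, ha q]
    rw [hvpq, hvq q, inv_div]
    field_simp [ha q, hDne q hqp]
    ring
  -- now decompose the target product
  rw [hsplit, Finset.prod_union hdisj2]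
  have hSpart : ∏ q ∈ S.erase p, (a q / a p - a' q / a' p) ^ ((l q : ℤ) - 1)
      = (∏ q ∈ S.erase p, (D q / (a p * a' p)))⁻¹ := by
    rw [← Finset.prod_inv_distrib]
    refine Finset.prod_congr rfl fun q hq => ?_
    have hq0 : l q = 0 := (hmemS q).mp (Finset.mem_of_mem_erase hq)
    rw [hX q, hq0]
    norm_num
  have hTpart : ∏ q ∈ T, (a q / a p - a' q / a' p) ^ ((l q : ℤ) - 1)
      = (∏ q ∈ T, D q ^ n q) / (a p * a' p) ^ s := by
    have : ∀ q ∈ T, (a q / a p - a' q / a' p) ^ ((l q : ℤ) - 1)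
        = (D q / (a p * a' p)) ^ n q := by
      intro q hq
      rw [hexpT q hq, zpow_natCast, hX q]
    rw [Finset.prod_congr rfl this]
    simp_rw [div_pow]
    rw [Finset.prod_div_distrib, Finset.prod_pow_eq_pow_sum, hsumT]
  rw [hSpart, hTpart, hNvp, hBp]
  -- turn the remaining products into explicit atoms
  have hprodS1 : ∏ q ∈ S.erase p, (D q / (a p * a' p))
      = (∏ q ∈ S.erase p, D q) / (a p * a' p) ^ (s - 1) := by
    rw [Finset.prod_div_distrib, Finset.prod_const, hcard']
  have hprodS2 : ∏ q ∈ S.erase p, (-(a p * a' q) / D q)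
      = ((-1 : ℝ) ^ (s - 1) * (a p) ^ (s - 1) * ∏ q ∈ S.erase p, a' q) / ∏ q ∈ S.erase p, D q := by
    rw [Finset.prod_div_distrib]
    congr 1
    have : ∀ q ∈ S.erase p, -(a p * a' q) = ((-1 : ℝ) * a p) * a' q := by
      intro q hq; ring
    rw [Finset.prod_congr rfl this, Finset.prod_mul_distrib, Finset.prod_const, hcard', mul_pow]
  rw [hprodS1, hprodS2]
  have hA'split : (∏ q ∈ S, a' q) = a' p * ∏ q ∈ S.erase p, a' q :=
    (Finset.mul_prod_erase S a' hp).symm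
  -- nonzeroness of the atoms
  have hPDne : (∏ q ∈ T, D q ^ n q) ≠ 0 :=
    Finset.prod_ne_zero_iff.mpr fun q hq => pow_ne_zero _ (hDne q (fun h => hpT (h ▸ hq)))
  have hP2ne : (∏ q ∈ S.erase p, D q) ≠ 0 :=
    Finset.prod_ne_zero_iff.mpr fun q hq => hDne q (Finset.mem_erase.mp hq).1
  have hP3ne : (∏ q ∈ S.erase p, a' q) ≠ 0 := Finset.prod_ne_zero_iff.mpr fun q _ => ha' q
  have hsucc : s = (s - 1) + 1 := by omega
  rw [hc, hA'split]
  rw [hsucc, pow_succ, pow_succ, pow_succ]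
  rcases Nat.even_or_odd (s - 1) with hpar | hpar
  · rw [hpar.neg_one_pow]
    field_simp [hPDne, hP2ne, hP3ne, ha p, ha' p]
    rw [Nat.add_sub_cancel, hpar.neg_one_pow]
    ring
  · rw [hpar.neg_one_pow]
    field_simp [hPDne, hP2ne, hP3ne, ha p, ha' p]
    rw [Nat.add_sub_cancel, hpar.neg_one_pow]
    ring
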